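/- Let G be a compact topological group with Haar probability measure μ. Let ρ and σ be continuous unitary representations of G on nonzero finite-dimensional complex inner product spaces V and W respectively, both irreducible, and inequivalent in the sense that the only ℂ-linear map T : V → W satisfying T ∘ ρ(g) = σ(g) ∘ T for all g ∈ G is T = 0. Then for all v, w ∈ V and v', w' ∈ W, the matrix coefficients are orthogonal in L²(G, μ): ∫_G ⟪w, ρ(g) v⟫ · conj(⟪w', σ(g) v'⟫) dμ(g) = 0. -/

import Mathlib

open MeasureTheory

/-- Schur orthogonality relations for matrix coefficients of two inequivalent
irreducible continuous unitary representations of a compact group. -/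
theorem schur_orthogonality_inequivalent
    {G : Type*} [Group G] [TopologicalSpace G] [IsTopologicalGroup G]
    [CompactSpace G] [T2Space G] [MeasurableSpace G] [BorelSpace G]
    (μ : Measure G) [μ.IsHaarMeasure] [IsProbabilityMeasure μ]
    {V : Type*} [NormedAddCommGroup V] [InnerProductSpace ℂ V]
    [FiniteDimensional ℂ V] [Nontrivial V]
    {W : Type*} [NormedAddCommGroup W] [InnerProductSpace ℂ W]
    [FiniteDimensional ℂ W] [Nontrivial W]
    (ρ : G →* (V ≃ₗ[ℂ] V)) (σ : G →* (W ≃ₗ[ℂ] W))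
    (hρunit : ∀ (g : G) (v w : V), (inner ℂ ((ρ g) v) ((ρ g) w) : ℂ) = inner ℂ v w)
    (hσunit : ∀ (g : G) (v w : W), (inner ℂ ((σ g) v) ((σ g) w) : ℂ) = inner ℂ v w)
    (hρcont : ∀ v : V, Continuous fun g : G => (ρ g) v)
    (hσcont : ∀ w : W, Continuous fun g : G => (σ g) w)
    (hρirr : ∀ U : Submodule ℂ V, (∀ (g : G), ∀ v ∈ U, (ρ g) v ∈ U) → U = ⊥ ∨ U = ⊤)
    (hσirr : ∀ U : Submodule ℂ W, (∀ (g : G), ∀ w ∈ U, (σ g) w ∈ U) → U = ⊥ ∨ U = ⊤)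
    (hineq : ∀ T : V →ₗ[ℂ] W, (∀ (g : G) (v : V), T ((ρ g) v) = (σ g) (T v)) → T = 0) :
    ∀ (v w : V) (v' w' : W),
      ∫ g, (inner ℂ w ((ρ g) v) : ℂ) * (starRingEnd ℂ) (inner ℂ w' ((σ g) v') : ℂ) ∂μ = 0 := by
  haveI : μ.IsMulRightInvariant := ⟨fun g => by
    haveI : IsProbabilityMeasure (μ.map (· * g)) :=
      Measure.isProbabilityMeasure_map (measurable_mul_const g).aemeasurable
    exact MeasureTheory.Measure.isHaarMeasure_eq_of_isProbabilityMeasure (μ.map (· * g)) μ⟩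
  intro v w v' w'
  -- rank-one operator T₀ x = ⟪w, x⟫ • w'
  set T₀ : V →ₗ[ℂ] W := (((innerSL ℂ) w).smulRight w').toLinearMap with hT₀
  -- the averaged integrand
  set φ : V → G → W := fun u g => (σ g⁻¹) (T₀ ((ρ g) u)) with hφ
  obtain ⟨b⟩ : Nonempty (Module.Basis (Fin (Module.finrank ℂ W)) ℂ W) :=
    ⟨Module.finBasis ℂ W⟩
  have hφcont : ∀ u, Continuous (φ u) := by
    intro u
    have heq : φ u
        = fun g => ∑ i, (b.coord i) (T₀ ((ρ g) u)) • (σ g⁻¹) (b i) := by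
      funext g
      simp only [hφ]
      conv_lhs => rw [← b.sum_repr (T₀ ((ρ g) u))]
      rw [map_sum]
      simp [Module.Basis.coord_apply, _root_.map_smul]
    rw [heq]
    exact continuous_finset_sum _ fun i _ =>
      (((b.coord i).continuous_of_finiteDimensional).comp
        ((T₀.continuous_of_finiteDimensional).comp (hρcont u))).smul
        ((hσcont (b i)).comp continuous_inv)
  have hφint : ∀ u, Integrable (φ u) μ := fun u =>
    (hφcont u).integrable_of_hasCompactSupport (HasCompactSupport.of_compactSpace _)
  -- the averaged operator
  set T : V →ₗ[ℂ] W :=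
    { toFun := fun u => ∫ g, φ u g ∂μ
      map_add' := fun u₁ u₂ => by
        show ∫ g, φ (u₁ + u₂) g ∂μ = (∫ g, φ u₁ g ∂μ) + ∫ g, φ u₂ g ∂μ
        rw [← integral_add (hφint u₁) (hφint u₂)]
        congr 1; funext g; simp [hφ, map_add]
      map_smul' := fun c u => by
        simp only [RingHom.id_apply]
        rw [← integral_smul]
        congr 1; funext g; simp [hφ, _root_.map_smul] } with hTdef
  have hT : ∀ (h : G) (u : V), T ((ρ h) u) = (σ h) (T u) := by
    intro h u
    have step1 : ∀ g : G, φ ((ρ h) u) g = (σ h) (φ u (g * h)) := by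
      intro g
      simp only [hφ]
      have e1 : (ρ g) ((ρ h) u) = (ρ (g * h)) u := by
        rw [map_mul ρ g h]; rfl
      have e2 : (σ h) ((σ (g * h)⁻¹) (T₀ ((ρ (g * h)) u)))
          = (σ (h * (g * h)⁻¹)) (T₀ ((ρ (g * h)) u)) := by
        rw [map_mul σ h (g * h)⁻¹]; rfl
      rw [e1, e2]
      congr 2
      group
    have hint' : Integrable (fun g => φ u (g * h)) μ :=
      (((hφcont u).comp (continuous_mul_right h))).integrable_of_hasCompactSupport
        (HasCompactSupport.of_compactSpace _)
    calc T ((ρ h) u) = ∫ g, φ ((ρ h) u) g ∂μ := rfl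
      _ = ∫ g, ((σ h).toLinearMap.toContinuousLinearMap) (φ u (g * h)) ∂μ := by
          simp_rw [step1]; rfl
      _ = ((σ h).toLinearMap.toContinuousLinearMap) (∫ g, φ u (g * h) ∂μ) :=
          ContinuousLinearMap.integral_comp_comm _ hint'
      _ = (σ h) (∫ g, φ u (g * h) ∂μ) := rfl
      _ = (σ h) (∫ g, φ u g ∂μ) := by rw [integral_mul_right_eq_self (φ u) h]
      _ = (σ h) (T u) := rfl
  have hT0 : T = 0 := hineq T hT
  have hσinv : ∀ (g : G) (x : W), (σ g) ((σ g⁻¹) x) = x := by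
    intro g x
    have e3 : (σ (g * g⁻¹)) x = (σ g) ((σ g⁻¹) x) := by
      rw [map_mul σ g g⁻¹]; rfl
    rw [← e3, mul_inv_cancel, map_one]
    rfl
  have hinner : ∀ g : G,
      (inner ℂ w ((ρ g) v) : ℂ) * (starRingEnd ℂ) (inner ℂ w' ((σ g) v') : ℂ)
        = inner ℂ v' (φ v g) := by
    intro g
    have h1 : (inner ℂ v' (φ v g) : ℂ) = inner ℂ ((σ g) v') (T₀ ((ρ g) v)) := by
      conv_lhs => rw [← hσunit g v' (φ v g)]
      simp only [hφ]
      rw [hσinv]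
    rw [h1, show T₀ ((ρ g) v) = (inner ℂ w ((ρ g) v) : ℂ) • w' from rfl,
      inner_smul_right, inner_conj_symm]
  calc ∫ g, (inner ℂ w ((ρ g) v) : ℂ) * (starRingEnd ℂ) (inner ℂ w' ((σ g) v') : ℂ) ∂μ
      = ∫ g, (inner ℂ v' (φ v g) : ℂ) ∂μ := by simp_rw [hinner]
    _ = inner ℂ v' (∫ g, φ v g ∂μ) := integral_inner (hφint v) v'
    _ = inner ℂ v' (T v) := rfl
    _ = 0 := by rw [hT0]; simp
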